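/- Let λ : ℝ \ {0} → ℝ be three times differentiable and satisfy, for all distinct nonzero x, y: λ'(y)F(x,y) + 2λ(y)G(x,y) = λ'(x)F(y,x) + 2λ(x)G(y,x), where F(x,y) = (1+x²+y²+xy)/(x(1+x²)) + 1/(y-x) and G(x,y) = (x+2y)/(x(1+x²)) - 1/(y-x)². Then λ satisfies the third-order ODE x²(1+x²)²λ'''(x) + 6x(1+x²)(1+3x²)λ''(x) + 6(1+12x²+15x⁴)λ'(x) + 24x(2+5x²)λ(x) = 0 for all x ≠ 0. -/

import Mathlib

open Filter Topology

/-- Auxiliary function `u(y)`: the regular part of the commutation relation, times `(y-x)²`. -/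
noncomputable def uu (lam : ℝ → ℝ) (x : ℝ) : ℝ → ℝ := fun y =>
  deriv lam y * (((1+x^2) + x*y + y^2)/(x*(1+x^2)))
  + (2 * lam y) * ((x + 2*y)/(x*(1+x^2)))
  - deriv lam x * (((1+x^2) + x*y + y^2)/(y+y^3))
  - (2 * lam x) * ((y + 2*x)/(y+y^3))

/-- Auxiliary function: the derivative of `uu lam x`. -/
noncomputable def ee (lam : ℝ → ℝ) (x : ℝ) : ℝ → ℝ := fun y =>
  (deriv (deriv lam) y * (((1+x^2) + x*y + y^2)/(x*(1+x^2)))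
    + deriv lam y * ((x + 2*y)/(x*(1+x^2)))
    + (2 * deriv lam y * ((x + 2*y)/(x*(1+x^2))) + 2 * lam y * (2/(x*(1+x^2)))))
  - deriv lam x * (((x + 2*y)*(y+y^3) - ((1+x^2) + x*y + y^2)*(1+3*y^2))/(y+y^3)^2)
  - (2 * lam x) * ((1*(y+y^3) - (y + 2*x)*(1+3*y^2))/(y+y^3)^2)

/-- Auxiliary function: the commutation relation multiplied by `(y-x)²`. -/
noncomputable def gg (lam : ℝ → ℝ) (x : ℝ) : ℝ → ℝ := fun y =>
  (y-x)^2 * uu lam x y + (y-x)*(deriv lam y + deriv lam x) - 2*(lam y - lam x)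

lemma denom_ne (y : ℝ) (hy : y ≠ 0) : y + y^3 ≠ 0 := by
  have h : y + y^3 = y*(1+y^2) := by ring
  rw [h]
  exact mul_ne_zero hy (by positivity)

lemma hasDerivAt_uu (lam : ℝ → ℝ) (x y : ℝ)
    (h1 : DifferentiableAt ℝ lam y) (h2 : DifferentiableAt ℝ (deriv lam) y) (hy : y ≠ 0) :
    HasDerivAt (uu lam x) (ee lam x y) y := by
  have hy3 : y + y^3 ≠ 0 := denom_ne y hy
  have hN : HasDerivAt (fun y : ℝ => (1+x^2) + x*y + y^2) (x + 2*y) y := by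
    have h := (((hasDerivAt_id' y).const_mul x).const_add (1+x^2)).add (hasDerivAt_pow 2 y)
    exact h.congr_deriv (by push_cast; ring)
  have hM : HasDerivAt (fun y : ℝ => x + 2*y) 2 y := by
    have h := ((hasDerivAt_id' y).const_mul (2:ℝ)).const_add x
    exact h.congr_deriv (by ring)
  have hQ : HasDerivAt (fun y : ℝ => y + 2*x) 1 y := (hasDerivAt_id' y).add_const (2*x)
  have hden : HasDerivAt (fun y : ℝ => y + y^3) (1 + 3*y^2) y := by
    have h := (hasDerivAt_id' y).add (hasDerivAt_pow 3 y)
    exact h.congr_deriv (by push_cast; ring)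
  have t1 := h2.hasDerivAt.mul (hN.div_const (x*(1+x^2)))
  have t2 := (h1.hasDerivAt.const_mul (2:ℝ)).mul (hM.div_const (x*(1+x^2)))
  have t3 := (hN.div hden hy3).const_mul (deriv lam x)
  have t4 := (hQ.div hden hy3).const_mul (2 * lam x)
  exact ((t1.add t2).sub t3).sub t4

lemma uu_self (lam : ℝ → ℝ) (x : ℝ) (hx : x ≠ 0) : uu lam x x = 0 := by
  have hx2 : (1:ℝ) + x^2 ≠ 0 := by positivity
  have hc : x*(1+x^2) ≠ 0 := mul_ne_zero hx hx2
  have hdx : x + x^3 ≠ 0 := denom_ne x hx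
  unfold uu
  field_simp
  ring

set_option maxHeartbeats 1000000 in
/-- The commutation relation
`λ'(y)F(x,y) + 2λ(y)G(x,y) = λ'(x)F(y,x) + 2λ(x)G(y,x)` for all distinct nonzero `x, y`,
with `F(x,y) = (1+x²+y²+xy)/(x(1+x²)) + 1/(y-x)` and `G(x,y) = (x+2y)/(x(1+x²)) - 1/(y-x)²`,
implies the third-order ODE
`x²(1+x²)²λ''' + 6x(1+x²)(1+3x²)λ'' + 6(1+12x²+15x⁴)λ' + 24x(2+5x²)λ = 0` on `ℝ \ {0}`. -/
theorem commutation_relation_implies_ODE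
    (lam : ℝ → ℝ)
    (hd1 : ∀ x : ℝ, x ≠ 0 → DifferentiableAt ℝ lam x)
    (hd2 : ∀ x : ℝ, x ≠ 0 → DifferentiableAt ℝ (deriv lam) x)
    (hd3 : ∀ x : ℝ, x ≠ 0 → DifferentiableAt ℝ (deriv (deriv lam)) x)
    (F : ℝ → ℝ → ℝ) (G : ℝ → ℝ → ℝ)
    (hF : ∀ x y : ℝ, x ≠ 0 → y ≠ 0 → x ≠ y →
      F x y = (1 + x^2 + y^2 + x*y) / (x * (1 + x^2)) + 1 / (y - x))
    (hG : ∀ x y : ℝ, x ≠ 0 → y ≠ 0 → x ≠ y →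
      G x y = (x + 2*y) / (x * (1 + x^2)) - 1 / (y - x)^2)
    (hcomm : ∀ x y : ℝ, x ≠ 0 → y ≠ 0 → x ≠ y →
      deriv lam y * F x y + 2 * lam y * G x y
        = deriv lam x * F y x + 2 * lam x * G y x) :
    ∀ x : ℝ, x ≠ 0 →
      x^2 * (1 + x^2)^2 * deriv (deriv (deriv lam)) x
        + 6 * x * (1 + x^2) * (1 + 3*x^2) * deriv (deriv lam) x
        + 6 * (1 + 12*x^2 + 15*x^4) * deriv lam x
        + 24 * x * (2 + 5*x^2) * lam x = 0 := by
  intro x hx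
  have hx2 : (1:ℝ) + x^2 ≠ 0 := by positivity
  have hc : x*(1+x^2) ≠ 0 := mul_ne_zero hx hx2
  have hdx : x + x^3 ≠ 0 := denom_ne x hx
  have hxpos : (0:ℝ) < |x| := abs_pos.mpr hx
  have hball_mem : Metric.ball x |x| ∈ 𝓝 x := Metric.ball_mem_nhds x hxpos
  have hball : ∀ y ∈ Metric.ball x |x|, y ≠ 0 := by
    intro y hy h0
    rw [Metric.mem_ball, Real.dist_eq, h0] at hy
    simp at hy
  -- g vanishes on the punctured ball
  have hpunct : ∀ y ∈ Metric.ball x |x|, y ≠ x → gg lam x y = 0 := by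
    intro y hyS hyx
    have hy0 := hball y hyS
    have hy2 : (1:ℝ) + y^2 ≠ 0 := by positivity
    have hy3 : y + y^3 ≠ 0 := denom_ne y hy0
    have h3 : y - x ≠ 0 := sub_ne_zero.mpr hyx
    have h4 : x - y ≠ 0 := sub_ne_zero.mpr (Ne.symm hyx)
    have key := hcomm x y hx hy0 (Ne.symm hyx)
    rw [hF x y hx hy0 (Ne.symm hyx), hG x y hx hy0 (Ne.symm hyx),
      hF y x hy0 hx hyx, hG y x hy0 hx hyx] at key
    have expand : gg lam x y
        = (y - x)^2 * ((deriv lam y * ((1 + x^2 + y^2 + x*y) / (x * (1 + x^2)) + 1 / (y - x))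
            + 2 * lam y * ((x + 2*y) / (x * (1 + x^2)) - 1 / (y - x)^2))
          - (deriv lam x * ((1 + y^2 + x^2 + y*x) / (y * (1 + y^2)) + 1 / (x - y))
            + 2 * lam x * ((y + 2*x) / (y * (1 + y^2)) - 1 / (x - y)^2))) := by
      unfold gg uu
      field_simp
      ring
    rw [expand, key, sub_self, mul_zero]
  -- g vanishes on the whole ball, by continuity at x
  have hgz : ∀ y ∈ Metric.ball x |x|, gg lam x y = 0 := by
    intro y hyS
    by_cases hyx : y = x
    · subst hyx
      have hu_cont : ContinuousAt (uu lam y) y :=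
        (hasDerivAt_uu lam y y (hd1 y hx) (hd2 y hx) hx).differentiableAt.continuousAt
      have hL : ContinuousAt (deriv lam) y := (hd2 y hx).continuousAt
      have hlam : ContinuousAt lam y := (hd1 y hx).continuousAt
      have hcont : ContinuousAt (gg lam y) y := by
        unfold gg
        fun_prop
      have h1 : Tendsto (gg lam y) (𝓝[≠] y) (𝓝 (gg lam y y)) :=
        hcont.continuousWithinAt
      have h2 : Tendsto (gg lam y) (𝓝[≠] y) (𝓝 0) := by
        refine tendsto_const_nhds.congr' ?_
        filter_upwards [mem_nhdsWithin_of_mem_nhds hball_mem, self_mem_nhdsWithin]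
          with z hz1 hz2
        exact (hpunct z hz1 hz2).symm
      exact tendsto_nhds_unique h1 h2
    · exact hpunct y hyS hyx
  -- first derivative identity on the ball
  have hI1 : ∀ y ∈ Metric.ball x |x|,
      2*(y-x)*uu lam x y + (y-x)^2 * ee lam x y + (y-x) * deriv (deriv lam) y
        - (deriv lam y - deriv lam x) = 0 := by
    intro y hyS
    have hy0 := hball y hyS
    have hd : HasDerivAt (gg lam x)
        ((↑(2:ℕ)*(y-x)^(2-1)*1) * uu lam x y + (y-x)^2 * ee lam x y
          + (1 * (deriv lam y + deriv lam x) + (y-x) * deriv (deriv lam) y)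
          - 2 * deriv lam y) y := by
      unfold gg
      have ha : HasDerivAt (fun y : ℝ => (y-x)^2) (↑(2:ℕ)*(y-x)^(2-1)*1) y :=
        ((hasDerivAt_id' y).sub_const x).pow 2
      exact ((ha.mul (hasDerivAt_uu lam x y (hd1 y hy0) (hd2 y hy0) hy0)).add
        (((hasDerivAt_id' y).sub_const x).mul
          ((hd2 y hy0).hasDerivAt.add_const (deriv lam x)))).sub
        (((hd1 y hy0).hasDerivAt.sub_const (lam x)).const_mul 2)
    have hz : HasDerivAt (gg lam x) 0 y := by
      have hev : gg lam x =ᶠ[𝓝 y] fun _ => 0 := by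
        filter_upwards [Metric.isOpen_ball.mem_nhds hyS] with z hz
        exact hgz z hz
      exact (hasDerivAt_const y (0:ℝ)).congr_of_eventuallyEq hev
    have huniq := hd.unique hz
    push_cast at huniq
    linear_combination huniq
  -- limits
  have hK : HasDerivAt (deriv (deriv lam)) (deriv (deriv (deriv lam)) x) x :=
    (hd3 x hx).hasDerivAt
  have T1 : Tendsto (fun y => (deriv (deriv lam) y - deriv (deriv lam) x)/(y - x)) (𝓝[≠] x)
      (𝓝 (deriv (deriv (deriv lam)) x)) := by
    have h := hasDerivAt_iff_tendsto_slope.mp hK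
    refine h.congr fun y => ?_
    rw [slope_def_field]
  have hev0 : ∀ᶠ y in 𝓝[≠] x, y ≠ 0 := by
    filter_upwards [mem_nhdsWithin_of_mem_nhds hball_mem] with y hy
    exact hball y hy
  have T2 : Tendsto (fun y => (deriv lam y - deriv lam x - (y-x) * deriv (deriv lam) x)
      / ((y-x)^2)) (𝓝[≠] x) (𝓝 (deriv (deriv (deriv lam)) x / 2)) := by
    apply HasDerivAt.lhopital_zero_nhdsNE
      (f' := fun y => deriv (deriv lam) y - deriv (deriv lam) x)
      (g' := fun y => 2*(y-x))
    · filter_upwards [hev0] with y hy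
      have h := ((hd2 y hy).hasDerivAt.sub_const (deriv lam x)).sub
        (((hasDerivAt_id' y).sub_const x).mul_const (deriv (deriv lam) x))
      exact h.congr_deriv (by ring)
    · refine Eventually.of_forall fun y => ?_
      have h := ((hasDerivAt_id' y).sub_const x).pow 2
      exact h.congr_deriv (by push_cast; ring)
    · filter_upwards [self_mem_nhdsWithin] with y hy
      exact mul_ne_zero two_ne_zero (sub_ne_zero.mpr hy)
    · have hcont : ContinuousAt (fun y => deriv lam y - deriv lam x
          - (y-x) * deriv (deriv lam) x) x := by
        have h := (hd2 x hx).continuousAt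
        fun_prop
      apply tendsto_nhdsWithin_of_tendsto_nhds
      simpa using hcont.tendsto
    · have hcont : ContinuousAt (fun y : ℝ => (y-x)^2) x := by fun_prop
      apply tendsto_nhdsWithin_of_tendsto_nhds
      simpa using hcont.tendsto
    · refine (T1.div_const 2).congr fun y => ?_
      rw [div_div, mul_comm]
  have hD : HasDerivAt (uu lam x) (ee lam x x) x :=
    hasDerivAt_uu lam x x (hd1 x hx) (hd2 x hx) hx
  have T3 : Tendsto (fun y => uu lam x y / (y - x)) (𝓝[≠] x) (𝓝 (ee lam x x)) := by
    have h := hasDerivAt_iff_tendsto_slope.mp hD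
    refine h.congr fun y => ?_
    rw [slope_def_field, uu_self lam x hx, sub_zero]
  have T4 : Tendsto (ee lam x) (𝓝 x) (𝓝 (ee lam x x)) := by
    have h1 : ContinuousAt (deriv (deriv lam)) x := (hd3 x hx).continuousAt
    have h2 : ContinuousAt (deriv lam) x := (hd2 x hx).continuousAt
    have h3 : ContinuousAt lam x := (hd1 x hx).continuousAt
    have hc2 : ((x:ℝ) + x^3)^2 ≠ 0 := pow_ne_zero 2 hdx
    have hcont : ContinuousAt (ee lam x) x := by
      unfold ee
      fun_prop (disch := assumption)
    exact hcont.tendsto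
  have hEq : (fun y => (deriv lam y - deriv lam x - (y-x) * deriv (deriv lam) x) / ((y-x)^2)
        - 2 * (uu lam x y / (y - x)) - ee lam x y)
      =ᶠ[𝓝[≠] x] (fun y => (deriv (deriv lam) y - deriv (deriv lam) x)/(y - x)) := by
    filter_upwards [mem_nhdsWithin_of_mem_nhds hball_mem, self_mem_nhdsWithin]
      with y hyS hyx
    have h := hI1 y hyS
    have hyx' : y - x ≠ 0 := sub_ne_zero.mpr (hyx : y ≠ x)
    have h2 : deriv lam y - deriv lam x - (y-x) * deriv (deriv lam) x
        = 2*(y-x)*uu lam x y + (y-x)^2 * ee lam x y + (y-x) * deriv (deriv lam) y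
          - (y-x) * deriv (deriv lam) x := by linarith
    rw [h2]
    field_simp
    ring
  have T5 : Tendsto (fun y => (deriv (deriv lam) y - deriv (deriv lam) x)/(y - x)) (𝓝[≠] x)
      (𝓝 (deriv (deriv (deriv lam)) x / 2 - 2 * ee lam x x - ee lam x x)) := by
    have h := (T2.sub (T3.const_mul 2)).sub (T4.mono_left nhdsWithin_le_nhds)
    exact h.congr' hEq
  have hfin : deriv (deriv (deriv lam)) x = deriv (deriv (deriv lam)) x / 2
      - 2 * ee lam x x - ee lam x x := tendsto_nhds_unique T1 T5
  have hKD : deriv (deriv (deriv lam)) x = -6 * ee lam x x := by linarith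
  rw [hKD]
  unfold ee
  have hc2 : ((x:ℝ) + x^3)^2 ≠ 0 := pow_ne_zero 2 hdx
  field_simp
  ring
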